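/- Let q_1, q_2 : [0,2π)^ν → ℝ be bounded measurable with η ≤ q_k(x) ≤ M for a.e. x, for some 0 < η ≤ M, and define ψ(t) := −(2π)^{−ν} ∫_{[0,2π)^ν} log[ (1 + q_1(x))^t (1 + q_2(x))^{1−t} − q_1(x)^t q_2(x)^{1−t} ] dx for t ∈ [0,1]. Then ψ is twice differentiable on (0,1), and ψ''(t) > 0 for every t ∈ (0,1) unless q_1(x) = q_2(x) for almost every x (in which case ψ ≡ 0 on [0,1]). -/

import Mathlib

open MeasureTheory Filter Set

noncomputable section

/-- The cube `[0, 2π)^ν`. -/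
def cube (ν : ℕ) : Set (Fin ν → ℝ) := Set.univ.pi fun _ => Set.Ico 0 (2 * Real.pi)

/-- `ψ(t) = −(2π)^{−ν} ∫ log[(1+q₁(x))^t (1+q₂(x))^{1−t} − q₁(x)^t q₂(x)^{1−t}] dx`. -/
def psiLimit {ν : ℕ} (q₁ q₂ : (Fin ν → ℝ) → ℝ) (t : ℝ) : ℝ :=
  -(((2 * Real.pi) ^ ν : ℝ)⁻¹ *
    ∫ x in cube ν,
      Real.log ((1 + q₁ x) ^ t * (1 + q₂ x) ^ (1 - t) - (q₁ x) ^ t * (q₂ x) ^ (1 - t)))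

namespace PsiAux

/-- `a^t * b^(1-t)`. -/
def Pf (a b t : ℝ) : ℝ := a ^ t * b ^ (1 - t)

lemma hasDerivAt_Pf {a b : ℝ} (ha : 0 < a) (hb : 0 < b) (t : ℝ) :
    HasDerivAt (fun s => Pf a b s) (Pf a b t * (Real.log a - Real.log b)) t := by
  have h1 : HasDerivAt (fun s : ℝ => a ^ s) (a ^ t * Real.log a) t :=
    (Real.hasStrictDerivAt_const_rpow ha t).hasDerivAt
  have h3 : HasDerivAt (fun s : ℝ => (1 : ℝ) - s) (-1) t := by
    simpa using (hasDerivAt_id t).const_sub 1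
  have h2 : HasDerivAt (fun s : ℝ => b ^ (1 - s))
      ((b ^ (1 - t) * Real.log b) * (-1)) t :=
    (Real.hasStrictDerivAt_const_rpow hb (1 - t)).hasDerivAt.comp t h3
  have := h1.mul h2
  exact this.congr_deriv (by simp only [Pf]; ring)

lemma Pf_pos {a b : ℝ} (ha : 0 < a) (hb : 0 < b) (t : ℝ) : 0 < Pf a b t :=
  mul_pos (Real.rpow_pos_of_pos ha t) (Real.rpow_pos_of_pos hb (1 - t))

lemma le_Pf {m a b t : ℝ} (hm : 0 < m) (hma : m ≤ a) (hmb : m ≤ b)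
    (ht0 : 0 ≤ t) (ht1 : t ≤ 1) : m ≤ Pf a b t := by
  have h : m ^ t * m ^ (1 - t) = m := by
    rw [← Real.rpow_add hm, show t + (1 - t) = 1 by ring, Real.rpow_one]
  calc m = m ^ t * m ^ (1 - t) := h.symm
    _ ≤ a ^ t * b ^ (1 - t) :=
      mul_le_mul (Real.rpow_le_rpow hm.le hma ht0)
        (Real.rpow_le_rpow hm.le hmb (by linarith))
        (Real.rpow_nonneg hm.le _) (Real.rpow_nonneg (hm.le.trans hma) _)

lemma Pf_le {K a b t : ℝ} (hK : 0 < K) (h0a : 0 ≤ a) (haK : a ≤ K) (h0b : 0 ≤ b)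
    (hbK : b ≤ K) (ht0 : 0 ≤ t) (ht1 : t ≤ 1) : Pf a b t ≤ K := by
  have h : K ^ t * K ^ (1 - t) = K := by
    rw [← Real.rpow_add hK, show t + (1 - t) = 1 by ring, Real.rpow_one]
  calc Pf a b t = a ^ t * b ^ (1 - t) := rfl
    _ ≤ K ^ t * K ^ (1 - t) :=
      mul_le_mul (Real.rpow_le_rpow h0a haK ht0)
        (Real.rpow_le_rpow h0b hbK (by linarith))
        (Real.rpow_nonneg h0b _) (Real.rpow_nonneg hK.le _)
    _ = K := h

lemma Pf_mono {a a' b b' t : ℝ} (h0 : 0 ≤ a') (ha : a' ≤ a) (h0b : 0 ≤ b') (hb : b' ≤ b)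
    (ht0 : 0 ≤ t) (ht1 : t ≤ 1) : Pf a' b' t ≤ Pf a b t :=
  mul_le_mul (Real.rpow_le_rpow h0 ha ht0) (Real.rpow_le_rpow h0b hb (by linarith))
    (Real.rpow_nonneg h0b _) (Real.rpow_nonneg (h0.trans ha) _)

lemma Pf_const_mul {c a b t : ℝ} (hc : 0 < c) (ha : 0 ≤ a) (hb : 0 ≤ b) :
    Pf (c * a) (c * b) t = c * Pf a b t := by
  have h : c ^ t * c ^ (1 - t) = c := by
    rw [← Real.rpow_add hc, show t + (1 - t) = 1 by ring, Real.rpow_one]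
  unfold Pf
  rw [Real.mul_rpow hc.le ha, Real.mul_rpow hc.le hb,
    show c ^ t * a ^ t * (c ^ (1 - t) * b ^ (1 - t))
      = c ^ t * c ^ (1 - t) * (a ^ t * b ^ (1 - t)) by ring, h]

lemma G_lb {η M u v t : ℝ} (hη : 0 < η) (hu : u ∈ Icc η M) (hv : v ∈ Icc η M)
    (ht0 : 0 ≤ t) (ht1 : t ≤ 1) :
    η / M ≤ Pf (1 + u) (1 + v) t - Pf u v t := by
  have hM : 0 < M := hη.trans_le (hu.1.trans hu.2)
  have hu0 : 0 < u := hη.trans_le hu.1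
  have hv0 : 0 < v := hη.trans_le hv.1
  have hc : (0:ℝ) < 1 + 1 / M := by positivity
  have h1 : (1 + 1 / M) * u ≤ 1 + u := by
    have : u / M ≤ 1 := (div_le_one hM).2 hu.2
    have e : (1 + 1 / M) * u = u + u / M := by field_simp
    linarith
  have h2 : (1 + 1 / M) * v ≤ 1 + v := by
    have : v / M ≤ 1 := (div_le_one hM).2 hv.2
    have e : (1 + 1 / M) * v = v + v / M := by field_simp
    linarith
  have key : (1 + 1 / M) * Pf u v t ≤ Pf (1 + u) (1 + v) t := by
    rw [← Pf_const_mul hc hu0.le hv0.le]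
    exact Pf_mono (by positivity) h1 (by positivity) h2 ht0 ht1
  have hQ : η ≤ Pf u v t := le_Pf hη hu.1 hv.1 ht0 ht1
  have e : (1 + 1 / M) * Pf u v t = Pf u v t + Pf u v t / M := by field_simp
  have h4 : η / M ≤ Pf u v t / M := (div_le_div_iff_of_pos_right hM).2 hQ
  linarith

lemma G_ub {η M u v t : ℝ} (hη : 0 < η) (hu : u ∈ Icc η M) (hv : v ∈ Icc η M)
    (ht0 : 0 ≤ t) (ht1 : t ≤ 1) :
    Pf (1 + u) (1 + v) t - Pf u v t ≤ 1 + M := by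
  have hu0 : 0 < u := hη.trans_le hu.1
  have hv0 : 0 < v := hη.trans_le hv.1
  have hM : 0 < M := hη.trans_le (hu.1.trans hu.2)
  have h1 : Pf (1 + u) (1 + v) t ≤ 1 + M :=
    Pf_le (by linarith) (by linarith) (by linarith [hu.2]) (by linarith) (by linarith [hv.2]) ht0 ht1
  have h2 : 0 < Pf u v t := Pf_pos hu0 hv0 t
  linarith

lemma hasDerivAt_logG {u v t : ℝ} (hu : 0 < u) (hv : 0 < v)
    (hG : Pf (1 + u) (1 + v) t - Pf u v t ≠ 0) :
    HasDerivAt (fun s => Real.log (Pf (1 + u) (1 + v) s - Pf u v s))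
      ((Pf (1 + u) (1 + v) t * (Real.log (1 + u) - Real.log (1 + v))
        - Pf u v t * (Real.log u - Real.log v))
        / (Pf (1 + u) (1 + v) t - Pf u v t)) t := by
  have hG' : HasDerivAt (fun s => Pf (1 + u) (1 + v) s - Pf u v s)
      (Pf (1 + u) (1 + v) t * (Real.log (1 + u) - Real.log (1 + v))
        - Pf u v t * (Real.log u - Real.log v)) t :=
    (hasDerivAt_Pf (by linarith) (by linarith) t).sub (hasDerivAt_Pf hu hv t)
  exact hG'.log hG

lemma hasDerivAt_F1 {u v t : ℝ} (hu : 0 < u) (hv : 0 < v)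
    (hG : Pf (1 + u) (1 + v) t - Pf u v t ≠ 0) :
    HasDerivAt (fun s =>
        (Pf (1 + u) (1 + v) s * (Real.log (1 + u) - Real.log (1 + v))
          - Pf u v s * (Real.log u - Real.log v))
        / (Pf (1 + u) (1 + v) s - Pf u v s))
      (-(Pf (1 + u) (1 + v) t * Pf u v t *
          ((Real.log (1 + u) - Real.log (1 + v)) - (Real.log u - Real.log v)) ^ 2
          / (Pf (1 + u) (1 + v) t - Pf u v t) ^ 2)) t := by
  set p := Real.log (1 + u) - Real.log (1 + v)
  set r := Real.log u - Real.log v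
  have hP := hasDerivAt_Pf (show (0:ℝ) < 1 + u by linarith) (show (0:ℝ) < 1 + v by linarith) t
  have hQ := hasDerivAt_Pf hu hv t
  have hnum : HasDerivAt (fun s => Pf (1 + u) (1 + v) s * p - Pf u v s * r)
      (Pf (1 + u) (1 + v) t * p * p - Pf u v t * r * r) t := by
    have h1 : HasDerivAt (fun s => Pf (1 + u) (1 + v) s * p)
        (Pf (1 + u) (1 + v) t * p * p) t := (hP.mul_const p).congr_deriv (by ring)
    have h2 : HasDerivAt (fun s => Pf u v s * r) (Pf u v t * r * r) t :=
      (hQ.mul_const r).congr_deriv (by ring)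
    exact h1.sub h2
  have hden : HasDerivAt (fun s => Pf (1 + u) (1 + v) s - Pf u v s)
      (Pf (1 + u) (1 + v) t * p - Pf u v t * r) t := hP.sub hQ
  exact (hnum.div hden hG).congr_deriv (by field_simp; ring)

lemma abs_log_sub_le {η M u v : ℝ} (hη : 0 < η) (hu : u ∈ Icc η M) (hv : v ∈ Icc η M) :
    |Real.log u - Real.log v| ≤ |Real.log η| + |Real.log M| := by
  have h1 : Real.log η ≤ Real.log u := Real.log_le_log hη hu.1
  have h2 : Real.log u ≤ Real.log M := Real.log_le_log (hη.trans_le hu.1) hu.2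
  have h3 : Real.log η ≤ Real.log v := Real.log_le_log hη hv.1
  have h4 : Real.log v ≤ Real.log M := Real.log_le_log (hη.trans_le hv.1) hv.2
  have e1 := le_abs_self (Real.log M)
  have e2 := neg_abs_le (Real.log η)
  rw [abs_le]; constructor <;> linarith

lemma abs_logp_sub_le {η M u v : ℝ} (hη : 0 < η) (hu : u ∈ Icc η M) (hv : v ∈ Icc η M) :
    |Real.log (1 + u) - Real.log (1 + v)| ≤ Real.log (1 + M) := by
  have h1 : 0 ≤ Real.log (1 + u) := Real.log_nonneg (by linarith [hu.1])
  have h2 : Real.log (1 + u) ≤ Real.log (1 + M) :=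
    Real.log_le_log (by linarith [hu.1]) (by linarith [hu.2])
  have h3 : 0 ≤ Real.log (1 + v) := Real.log_nonneg (by linarith [hv.1])
  have h4 : Real.log (1 + v) ≤ Real.log (1 + M) :=
    Real.log_le_log (by linarith [hv.1]) (by linarith [hv.2])
  rw [abs_le]; constructor <;> linarith

def C0 (η M : ℝ) : ℝ := |Real.log (η / M)| + |Real.log (1 + M)|
def C1 (η M : ℝ) : ℝ :=
  ((1 + M) * Real.log (1 + M) + M * (|Real.log η| + |Real.log M|)) / (η / M)
def C2 (η M : ℝ) : ℝ :=
  ((1 + M) * M * (Real.log (1 + M) + (|Real.log η| + |Real.log M|)) ^ 2) / (η / M) ^ 2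

lemma log_bound {η M u v t : ℝ} (hη : 0 < η) (hu : u ∈ Icc η M) (hv : v ∈ Icc η M)
    (ht0 : 0 ≤ t) (ht1 : t ≤ 1) :
    |Real.log (Pf (1 + u) (1 + v) t - Pf u v t)| ≤ C0 η M := by
  have hM : 0 < M := hη.trans_le (hu.1.trans hu.2)
  have hlb := G_lb hη hu hv ht0 ht1
  have hub := G_ub hη hu hv ht0 ht1
  have h0 : (0:ℝ) < η / M := by positivity
  have h1 : Real.log (η / M) ≤ Real.log (Pf (1 + u) (1 + v) t - Pf u v t) :=
    Real.log_le_log h0 hlb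
  have h2 : Real.log (Pf (1 + u) (1 + v) t - Pf u v t) ≤ Real.log (1 + M) :=
    Real.log_le_log (h0.trans_le hlb) hub
  have e1 := le_abs_self (Real.log (1 + M))
  have e2 := neg_abs_le (Real.log (η / M))
  have e3 := abs_nonneg (Real.log (η / M))
  have e4 := abs_nonneg (Real.log (1 + M))
  rw [C0, abs_le]; constructor <;> linarith

lemma F1_bound {η M u v t : ℝ} (hη : 0 < η) (hu : u ∈ Icc η M) (hv : v ∈ Icc η M)
    (ht0 : 0 ≤ t) (ht1 : t ≤ 1) :
    |(Pf (1 + u) (1 + v) t * (Real.log (1 + u) - Real.log (1 + v))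
        - Pf u v t * (Real.log u - Real.log v))
      / (Pf (1 + u) (1 + v) t - Pf u v t)| ≤ C1 η M := by
  have hM : 0 < M := hη.trans_le (hu.1.trans hu.2)
  have hu0 : 0 < u := hη.trans_le hu.1
  have hv0 : 0 < v := hη.trans_le hv.1
  have hlb := G_lb hη hu hv ht0 ht1
  have h0 : (0:ℝ) < η / M := by positivity
  have hPpos : (0:ℝ) < Pf (1 + u) (1 + v) t := Pf_pos (by linarith) (by linarith) t
  have hQpos : (0:ℝ) < Pf u v t := Pf_pos hu0 hv0 t
  have hPle : Pf (1 + u) (1 + v) t ≤ 1 + M :=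
    Pf_le (by linarith) (by linarith) (by linarith [hu.2]) (by linarith) (by linarith [hv.2]) ht0 ht1
  have hQle : Pf u v t ≤ M := Pf_le hM hu0.le hu.2 hv0.le hv.2 ht0 ht1
  have hp := abs_logp_sub_le hη hu hv
  have hr := abs_log_sub_le hη hu hv
  have hnum : |Pf (1 + u) (1 + v) t * (Real.log (1 + u) - Real.log (1 + v))
      - Pf u v t * (Real.log u - Real.log v)|
      ≤ (1 + M) * Real.log (1 + M) + M * (|Real.log η| + |Real.log M|) := by
    calc _ ≤ |Pf (1 + u) (1 + v) t * (Real.log (1 + u) - Real.log (1 + v))|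
          + |Pf u v t * (Real.log u - Real.log v)| := abs_sub _ _
      _ ≤ (1 + M) * Real.log (1 + M) + M * (|Real.log η| + |Real.log M|) := by
          rw [abs_mul, abs_mul, abs_of_pos hPpos, abs_of_pos hQpos]
          exact add_le_add (mul_le_mul hPle hp (abs_nonneg _) (by linarith))
            (mul_le_mul hQle hr (abs_nonneg _) hM.le)
  rw [abs_div, abs_of_pos (h0.trans_le hlb), C1]
  exact div_le_div₀ ((abs_nonneg _).trans hnum) hnum h0 hlb

lemma F2_bound {η M u v t : ℝ} (hη : 0 < η) (hu : u ∈ Icc η M) (hv : v ∈ Icc η M)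
    (ht0 : 0 ≤ t) (ht1 : t ≤ 1) :
    |(-(Pf (1 + u) (1 + v) t * Pf u v t *
        ((Real.log (1 + u) - Real.log (1 + v)) - (Real.log u - Real.log v)) ^ 2
        / (Pf (1 + u) (1 + v) t - Pf u v t) ^ 2))| ≤ C2 η M := by
  have hM : 0 < M := hη.trans_le (hu.1.trans hu.2)
  have hu0 : 0 < u := hη.trans_le hu.1
  have hv0 : 0 < v := hη.trans_le hv.1
  have hlb := G_lb hη hu hv ht0 ht1
  have h0 : (0:ℝ) < η / M := by positivity
  have hPpos : (0:ℝ) < Pf (1 + u) (1 + v) t := Pf_pos (by linarith) (by linarith) t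
  have hQpos : (0:ℝ) < Pf u v t := Pf_pos hu0 hv0 t
  have hPle : Pf (1 + u) (1 + v) t ≤ 1 + M :=
    Pf_le (by linarith) (by linarith) (by linarith [hu.2]) (by linarith) (by linarith [hv.2]) ht0 ht1
  have hQle : Pf u v t ≤ M := Pf_le hM hu0.le hu.2 hv0.le hv.2 ht0 ht1
  have hp := abs_logp_sub_le hη hu hv
  have hr := abs_log_sub_le hη hu hv
  set p := Real.log (1 + u) - Real.log (1 + v)
  set r := Real.log u - Real.log v
  have hpr : |p - r| ≤ Real.log (1 + M) + (|Real.log η| + |Real.log M|) := by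
    calc |p - r| ≤ |p| + |r| := abs_sub _ _
      _ ≤ _ := add_le_add hp hr
  have hpr2 : (p - r) ^ 2 ≤ (Real.log (1 + M) + (|Real.log η| + |Real.log M|)) ^ 2 := by
    rw [← sq_abs]
    exact pow_le_pow_left₀ (abs_nonneg _) hpr 2
  have hnum : Pf (1 + u) (1 + v) t * Pf u v t * (p - r) ^ 2
      ≤ (1 + M) * M * (Real.log (1 + M) + (|Real.log η| + |Real.log M|)) ^ 2 := by
    have h1 : Pf (1 + u) (1 + v) t * Pf u v t ≤ (1 + M) * M :=
      mul_le_mul hPle hQle hQpos.le (by linarith)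
    exact mul_le_mul h1 hpr2 (sq_nonneg _) (by positivity)
  have hden : (η / M) ^ 2 ≤ (Pf (1 + u) (1 + v) t - Pf u v t) ^ 2 :=
    pow_le_pow_left₀ h0.le hlb 2
  rw [abs_neg, abs_div, abs_of_nonneg (by positivity), abs_of_nonneg (sq_nonneg _), C2]
  exact div_le_div₀ (by positivity) hnum (by positivity) hden

lemma pr_ne_zero {η M u v : ℝ} (hη : 0 < η) (hu : u ∈ Icc η M) (hv : v ∈ Icc η M)
    (huv : u ≠ v) :
    (Real.log (1 + u) - Real.log (1 + v)) - (Real.log u - Real.log v) ≠ 0 := by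
  intro h
  have hu0 : 0 < u := hη.trans_le hu.1
  have hv0 : 0 < v := hη.trans_le hv.1
  have h1 : Real.log ((1 + u) * v) = Real.log (u * (1 + v)) := by
    rw [Real.log_mul (by positivity : (0:ℝ) < 1 + u).ne' hv0.ne',
      Real.log_mul hu0.ne' (by positivity : (0:ℝ) < 1 + v).ne']
    linarith
  have h2 : (1 + u) * v = u * (1 + v) :=
    Real.log_injOn_pos (mem_Ioi.2 (by positivity)) (mem_Ioi.2 (by positivity)) h1
  apply huv; nlinarith

section Functions

variable {α : Type*} [MeasurableSpace α]

def Gf (q₁ q₂ : α → ℝ) (t : ℝ) (x : α) : ℝ :=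
  Pf (1 + q₁ x) (1 + q₂ x) t - Pf (q₁ x) (q₂ x) t

def F1f (q₁ q₂ : α → ℝ) (t : ℝ) (x : α) : ℝ :=
  (Pf (1 + q₁ x) (1 + q₂ x) t * (Real.log (1 + q₁ x) - Real.log (1 + q₂ x))
    - Pf (q₁ x) (q₂ x) t * (Real.log (q₁ x) - Real.log (q₂ x)))
  / (Pf (1 + q₁ x) (1 + q₂ x) t - Pf (q₁ x) (q₂ x) t)

def Wf (q₁ q₂ : α → ℝ) (t : ℝ) (x : α) : ℝ :=
  Pf (1 + q₁ x) (1 + q₂ x) t * Pf (q₁ x) (q₂ x) t *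
    ((Real.log (1 + q₁ x) - Real.log (1 + q₂ x)) - (Real.log (q₁ x) - Real.log (q₂ x))) ^ 2
  / (Pf (1 + q₁ x) (1 + q₂ x) t - Pf (q₁ x) (q₂ x) t) ^ 2

def F2f (q₁ q₂ : α → ℝ) (t : ℝ) (x : α) : ℝ := -(Wf q₁ q₂ t x)

variable {q₁ q₂ : α → ℝ}

lemma measurable_Gf (hm₁ : Measurable q₁) (hm₂ : Measurable q₂) (t : ℝ) :
    Measurable (Gf q₁ q₂ t) := by
  unfold Gf Pf
  exact (((measurable_const.add hm₁).pow measurable_const).mul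
      ((measurable_const.add hm₂).pow measurable_const)).sub
    ((hm₁.pow measurable_const).mul (hm₂.pow measurable_const))

lemma measurable_F1f (hm₁ : Measurable q₁) (hm₂ : Measurable q₂) (t : ℝ) :
    Measurable (F1f q₁ q₂ t) := by
  unfold F1f Pf
  exact ((((measurable_const.add hm₁).pow measurable_const).mul
          ((measurable_const.add hm₂).pow measurable_const)).mul
        ((measurable_const.add hm₁).log.sub (measurable_const.add hm₂).log) |>.sub
      (((hm₁.pow measurable_const).mul (hm₂.pow measurable_const)).mul
        (hm₁.log.sub hm₂.log))).div
    ((((measurable_const.add hm₁).pow measurable_const).mul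
        ((measurable_const.add hm₂).pow measurable_const)).sub
      ((hm₁.pow measurable_const).mul (hm₂.pow measurable_const)))

lemma measurable_Wf (hm₁ : Measurable q₁) (hm₂ : Measurable q₂) (t : ℝ) :
    Measurable (Wf q₁ q₂ t) := by
  unfold Wf Pf
  exact (((((measurable_const.add hm₁).pow measurable_const).mul
          ((measurable_const.add hm₂).pow measurable_const)).mul
        ((hm₁.pow measurable_const).mul (hm₂.pow measurable_const))).mul
      ((((measurable_const.add hm₁).log.sub (measurable_const.add hm₂).log).sub
        (hm₁.log.sub hm₂.log)).pow measurable_const)).div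
    (((((measurable_const.add hm₁).pow measurable_const).mul
        ((measurable_const.add hm₂).pow measurable_const)).sub
      ((hm₁.pow measurable_const).mul (hm₂.pow measurable_const))).pow measurable_const)

lemma measurable_F2f (hm₁ : Measurable q₁) (hm₂ : Measurable q₂) (t : ℝ) :
    Measurable (F2f q₁ q₂ t) := (measurable_Wf hm₁ hm₂ t).neg

end Functions

theorem deriv_aux {α : Type*} [MeasurableSpace α] (μ : Measure α) [IsFiniteMeasure μ]
    (q₁ q₂ : α → ℝ) (η M : ℝ) (hη : 0 < η)
    (hm₁ : Measurable q₁) (hm₂ : Measurable q₂)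
    (hq₁ : ∀ᵐ x ∂μ, q₁ x ∈ Icc η M) (hq₂ : ∀ᵐ x ∂μ, q₂ x ∈ Icc η M)
    {t₀ : ℝ} (ht₀ : t₀ ∈ Ioo (0:ℝ) 1) :
    HasDerivAt (fun t => ∫ x, Real.log (Gf q₁ q₂ t x) ∂μ) (∫ x, F1f q₁ q₂ t₀ x ∂μ) t₀ ∧
    HasDerivAt (fun t => ∫ x, F1f q₁ q₂ t x ∂μ) (∫ x, F2f q₁ q₂ t₀ x ∂μ) t₀ ∧
    Integrable (F2f q₁ q₂ t₀) μ := by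
  obtain ⟨ht0, ht1⟩ := ht₀
  have hε_pos : 0 < min t₀ (1 - t₀) := lt_min ht0 (by linarith)
  have hball : ∀ s ∈ Metric.ball t₀ (min t₀ (1 - t₀)), 0 ≤ s ∧ s ≤ 1 := by
    intro s hs
    rw [Metric.mem_ball, Real.dist_eq, abs_lt] at hs
    have h1 := min_le_left t₀ (1 - t₀); have h2 := min_le_right t₀ (1 - t₀)
    constructor <;> linarith [hs.1, hs.2]
  have hAE : ∀ᵐ x ∂μ, q₁ x ∈ Icc η M ∧ q₂ x ∈ Icc η M := hq₁.and hq₂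
  -- first derivative
  have hInt0 : Integrable (fun x => Real.log (Gf q₁ q₂ t₀ x)) μ := by
    refine Integrable.mono' (integrable_const (C0 η M))
      ((measurable_Gf hm₁ hm₂ t₀).log.aestronglyMeasurable) ?_
    filter_upwards [hAE] with x hx
    simpa [Gf, Real.norm_eq_abs] using log_bound hη hx.1 hx.2 ht0.le ht1.le
  have hbound1 : ∀ᵐ x ∂μ, ∀ t ∈ Metric.ball t₀ (min t₀ (1 - t₀)),
      ‖F1f q₁ q₂ t x‖ ≤ C1 η M := by
    filter_upwards [hAE] with x hx t ht
    obtain ⟨h0, h1⟩ := hball t ht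
    simpa only [F1f, Real.norm_eq_abs] using F1_bound hη hx.1 hx.2 h0 h1
  have hdiff1 : ∀ᵐ x ∂μ, ∀ t ∈ Metric.ball t₀ (min t₀ (1 - t₀)),
      HasDerivAt (fun t => Real.log (Gf q₁ q₂ t x)) (F1f q₁ q₂ t x) t := by
    filter_upwards [hAE] with x hx t ht
    obtain ⟨h0, h1⟩ := hball t ht
    have hM : 0 < M := hη.trans_le (hx.1.1.trans hx.1.2)
    have hGne : Pf (1 + q₁ x) (1 + q₂ x) t - Pf (q₁ x) (q₂ x) t ≠ 0 :=
      ne_of_gt (lt_of_lt_of_le (div_pos hη hM) (G_lb hη hx.1 hx.2 h0 h1))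
    have := hasDerivAt_logG (hη.trans_le hx.1.1) (hη.trans_le hx.2.1) hGne
    simpa [Gf, F1f] using this
  have app1 := hasDerivAt_integral_of_dominated_loc_of_deriv_le (Metric.ball_mem_nhds t₀ hε_pos)
    (Eventually.of_forall fun t => ((measurable_Gf hm₁ hm₂ t).log.aestronglyMeasurable))
    hInt0 ((measurable_F1f hm₁ hm₂ t₀).aestronglyMeasurable)
    hbound1 (integrable_const _) hdiff1
  -- second derivative
  have hbound2 : ∀ᵐ x ∂μ, ∀ t ∈ Metric.ball t₀ (min t₀ (1 - t₀)),
      ‖F2f q₁ q₂ t x‖ ≤ C2 η M := by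
    filter_upwards [hAE] with x hx t ht
    obtain ⟨h0, h1⟩ := hball t ht
    simpa only [F2f, Wf, Real.norm_eq_abs] using F2_bound hη hx.1 hx.2 h0 h1
  have hdiff2 : ∀ᵐ x ∂μ, ∀ t ∈ Metric.ball t₀ (min t₀ (1 - t₀)),
      HasDerivAt (fun t => F1f q₁ q₂ t x) (F2f q₁ q₂ t x) t := by
    filter_upwards [hAE] with x hx t ht
    obtain ⟨h0, h1⟩ := hball t ht
    have hM : 0 < M := hη.trans_le (hx.1.1.trans hx.1.2)
    have hGne : Pf (1 + q₁ x) (1 + q₂ x) t - Pf (q₁ x) (q₂ x) t ≠ 0 :=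
      ne_of_gt (lt_of_lt_of_le (div_pos hη hM) (G_lb hη hx.1 hx.2 h0 h1))
    have := hasDerivAt_F1 (hη.trans_le hx.1.1) (hη.trans_le hx.2.1) hGne
    simpa [F1f, F2f, Wf] using this
  have app2 := hasDerivAt_integral_of_dominated_loc_of_deriv_le (Metric.ball_mem_nhds t₀ hε_pos)
    (Eventually.of_forall fun t => ((measurable_F1f hm₁ hm₂ t).aestronglyMeasurable))
    app1.1 ((measurable_F2f hm₁ hm₂ t₀).aestronglyMeasurable)
    hbound2 (integrable_const _) hdiff2
  exact ⟨app1.2, app2.2, app2.1⟩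

end PsiAux

open PsiAux

instance cubeFinite (ν : ℕ) : IsFiniteMeasure (volume.restrict (cube ν)) := by
  constructor
  rw [Measure.restrict_apply_univ, cube, volume_pi_pi]
  exact ENNReal.prod_lt_top fun i _ => by simp [Real.volume_Ico]; exact ENNReal.mul_lt_top (by simp) ENNReal.ofReal_lt_top

/-- **Strict convexity of ψ.**  For bounded measurable `q₁, q₂` with `η ≤ q_k ≤ M` a.e.
(`0 < η ≤ M`), the function `ψ` is twice differentiable on `(0,1)`, and `ψ''(t) > 0` for all
`t ∈ (0,1)` unless `q₁ = q₂` almost everywhere, in which case `ψ ≡ 0` on `[0,1]`. -/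
theorem psiLimit_strictly_convex {ν : ℕ} (hν : 1 ≤ ν)
    (q₁ q₂ : (Fin ν → ℝ) → ℝ) (η M : ℝ) (hη : 0 < η) (hηM : η ≤ M)
    (hmeas₁ : Measurable q₁) (hmeas₂ : Measurable q₂)
    (hq₁ : ∀ᵐ x ∂(volume.restrict (cube ν)), q₁ x ∈ Set.Icc η M)
    (hq₂ : ∀ᵐ x ∂(volume.restrict (cube ν)), q₂ x ∈ Set.Icc η M) :
    ∃ D₁ D₂ : ℝ → ℝ,
      (∀ t ∈ Set.Ioo (0 : ℝ) 1,
        HasDerivAt (psiLimit q₁ q₂) (D₁ t) t ∧ HasDerivAt D₁ (D₂ t) t) ∧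
      (¬ q₁ =ᵐ[volume.restrict (cube ν)] q₂ →
        ∀ t ∈ Set.Ioo (0 : ℝ) 1, 0 < D₂ t) ∧
      (q₁ =ᵐ[volume.restrict (cube ν)] q₂ →
        ∀ t ∈ Set.Icc (0 : ℝ) 1, psiLimit q₁ q₂ t = 0) := by
  set μ := volume.restrict (cube ν) with hμ
  set c : ℝ := ((2 * Real.pi) ^ ν : ℝ)⁻¹ with hc
  have hcpos : 0 < c := by
    rw [hc]
    have : (0:ℝ) < 2 * Real.pi := by positivity
    positivity
  have hψ : psiLimit q₁ q₂ = fun t => -(c * ∫ x, Real.log (Gf q₁ q₂ t x) ∂μ) := by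
    funext t; rfl
  refine ⟨fun t => -(c * ∫ x, F1f q₁ q₂ t x ∂μ), fun t => -(c * ∫ x, F2f q₁ q₂ t x ∂μ),
    ?_, ?_, ?_⟩
  · intro t ht
    obtain ⟨h1, h2, _⟩ := deriv_aux μ q₁ q₂ η M hη hmeas₁ hmeas₂ hq₁ hq₂ ht
    exact ⟨hψ ▸ (h1.const_mul c).neg, (h2.const_mul c).neg⟩
  · intro hne t ht
    obtain ⟨_, _, hint⟩ := deriv_aux μ q₁ q₂ η M hη hmeas₁ hmeas₂ hq₁ hq₂ ht
    have hAE : ∀ᵐ x ∂μ, q₁ x ∈ Icc η M ∧ q₂ x ∈ Icc η M := hq₁.and hq₂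
    have hneg : ∫ x, F2f q₁ q₂ t x ∂μ = -∫ x, Wf q₁ q₂ t x ∂μ := by
      simp only [F2f]; exact integral_neg _
    have hintW : Integrable (Wf q₁ q₂ t) μ :=
      hint.neg.congr (Eventually.of_forall fun x => by simp [F2f])
    have hnn : 0 ≤ᵐ[μ] Wf q₁ q₂ t := by
      filter_upwards [hAE] with x hx
      have hu0 : 0 < q₁ x := hη.trans_le hx.1.1
      have hv0 : 0 < q₂ x := hη.trans_le hx.2.1
      have hP := Pf_pos (show (0:ℝ) < 1 + q₁ x by linarith) (show (0:ℝ) < 1 + q₂ x by linarith) t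
      have hQ := Pf_pos hu0 hv0 t
      have : 0 ≤ Wf q₁ q₂ t x := by
        unfold Wf
        apply div_nonneg _ (sq_nonneg _)
        exact mul_nonneg (mul_nonneg hP.le hQ.le) (sq_nonneg _)
      exact this
    have hIW : 0 < ∫ x, Wf q₁ q₂ t x ∂μ := by
      rw [integral_pos_iff_support_of_nonneg_ae hnn hintW]
      set A : Set (Fin ν → ℝ) := {x | q₁ x ∈ Icc η M ∧ q₂ x ∈ Icc η M} with hA
      have hAc : μ Aᶜ = 0 := by
        rw [hA]
        have := hAE
        rwa [MeasureTheory.ae_iff] at this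
      have hSne : μ {x | q₁ x ≠ q₂ x} ≠ 0 := by
        intro h
        exact hne (by rwa [Filter.EventuallyEq, MeasureTheory.ae_iff] )
      have hsub : {x | q₁ x ≠ q₂ x} ∩ A ⊆ Function.support (Wf q₁ q₂ t) := by
        rintro x ⟨hxS, hxA⟩
        have hu0 : 0 < q₁ x := hη.trans_le hxA.1.1
        have hv0 : 0 < q₂ x := hη.trans_le hxA.2.1
        have hP := Pf_pos (show (0:ℝ) < 1 + q₁ x by linarith)
          (show (0:ℝ) < 1 + q₂ x by linarith) t
        have hQ := Pf_pos hu0 hv0 t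
        have hM : 0 < M := hη.trans_le (hxA.1.1.trans hxA.1.2)
        have hprne := pr_ne_zero hη hxA.1 hxA.2 hxS
        have hpr2 : 0 < ((Real.log (1 + q₁ x) - Real.log (1 + q₂ x))
            - (Real.log (q₁ x) - Real.log (q₂ x))) ^ 2 := by
          rw [← sq_abs]; exact pow_pos (abs_pos.2 hprne) 2
        have : 0 < Wf q₁ q₂ t x := by
          unfold Wf
          apply div_pos
          · exact mul_pos (mul_pos hP hQ) hpr2
          · exact pow_pos (lt_of_lt_of_le (div_pos hη hM)
              (G_lb hη hxA.1 hxA.2 ht.1.le ht.2.le)) 2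
        exact this.ne'
      calc (0 : ENNReal) < μ {x | q₁ x ≠ q₂ x} := pos_iff_ne_zero.2 hSne
        _ = μ ({x | q₁ x ≠ q₂ x} ∩ A) := (measure_inter_conull hAc).symm
        _ ≤ μ (Function.support (Wf q₁ q₂ t)) := measure_mono hsub
    show 0 < -(c * ∫ x, F2f q₁ q₂ t x ∂μ)
    rw [hneg]
    have : -(c * -∫ x, Wf q₁ q₂ t x ∂μ) = c * ∫ x, Wf q₁ q₂ t x ∂μ := by ring
    rw [this]
    exact mul_pos hcpos hIW
  · intro heq t _
    have hzero : (fun x => Real.log (Gf q₁ q₂ t x)) =ᵐ[μ] (fun _ => (0:ℝ)) := by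
      filter_upwards [heq, hq₁] with x hx hx1
      have hq0 : 0 < q₁ x := hη.trans_le hx1.1
      have hone : Gf q₁ q₂ t x = 1 := by
        simp only [Gf, Pf, ← hx]
        rw [← Real.rpow_add (by linarith : (0:ℝ) < 1 + q₁ x), ← Real.rpow_add hq0,
          show t + (1 - t) = 1 by ring, Real.rpow_one, Real.rpow_one]
        ring
      rw [hone, Real.log_one]
    have : psiLimit q₁ q₂ t = -(c * ∫ x, Real.log (Gf q₁ q₂ t x) ∂μ) := by rw [hψ]
    rw [this, integral_congr_ae hzero, integral_zero]
    simp

end
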